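/- arXiv:1112.5388 — 3 statements merged into one kernel-verified Lean document; each statement's English description precedes it below -/
import Mathlib

section
/- Let p ∈ [1,∞), γ > −d and w(x) = |x|^γ. Then the set of Schwartz functions f on ℝ^d whose Fourier transform has compact support is dense in L^p(ℝ^d, w), assuming the Schwartz functions themselves are dense in L^p(ℝ^d, w). -/
open MeasureTheory ENNReal NNReal
open SchwartzMap Metric Set Function Filter
open scoped FourierTransform Topology

set_option maxHeartbeats 1000000

noncomputable section

lemma weight_ball_lt_top (d : ℕ) (hd : 1 ≤ d) (γ : ℝ) (hγ : -(d : ℝ) < γ) :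
    ∫⁻ x in ball (0 : EuclideanSpace ℝ (Fin d)) 1, ENNReal.ofReal (‖x‖ ^ γ) < ∞ := by
  rcases le_or_gt 0 γ with h0 | h0
  · calc ∫⁻ x in ball (0 : EuclideanSpace ℝ (Fin d)) 1, ENNReal.ofReal (‖x‖ ^ γ)
        ≤ ∫⁻ _ in ball (0 : EuclideanSpace ℝ (Fin d)) 1, 1 := by
          refine setLIntegral_mono' measurableSet_ball fun x hx => ?_
          refine ENNReal.ofReal_le_one.2 (Real.rpow_le_one (norm_nonneg _) ?_ h0)
          exact (mem_ball_zero_iff.1 hx).le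
      _ = volume (ball (0 : EuclideanSpace ℝ (Fin d)) 1) := by
          rw [setLIntegral_const, one_mul]
      _ < ∞ := measure_ball_lt_top
  · have hγne : γ ≠ 0 := h0.ne
    haveI : Nontrivial (EuclideanSpace ℝ (Fin d)) := by
      refine Module.nontrivial_of_finrank_pos (R := ℝ) ?_
      rw [finrank_euclideanSpace_fin]; omega
    have hmble : AEMeasurable (fun x : EuclideanSpace ℝ (Fin d) => ‖x‖ ^ γ)
        (volume.restrict (ball (0 : EuclideanSpace ℝ (Fin d)) 1)) := by
      apply Measurable.aemeasurable; fun_prop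
    rw [MeasureTheory.lintegral_eq_lintegral_meas_lt _
      (Filter.Eventually.of_forall fun x => Real.rpow_nonneg (norm_nonneg _) γ) hmble]
    set V := volume (ball (0 : EuclideanSpace ℝ (Fin d)) 1) with hV
    have hVlt : V < ∞ := measure_ball_lt_top
    have key : ∀ t : ℝ, 0 < t →
        (volume.restrict (ball (0 : EuclideanSpace ℝ (Fin d)) 1))
          {a | t < ‖a‖ ^ γ} ≤ min V (ENNReal.ofReal (t ^ ((d : ℝ) * γ⁻¹)) * V) := by
      intro t ht
      refine le_min ((measure_mono (subset_univ _)).trans ?_) ?_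
      · rw [Measure.restrict_apply_univ]
      · have hsub : {a : EuclideanSpace ℝ (Fin d) | t < ‖a‖ ^ γ} ⊆ ball 0 (t ^ γ⁻¹) := by
          intro a ha
          simp only [mem_setOf_eq] at ha
          rw [mem_ball_zero_iff]
          by_contra hcon
          push_neg at hcon
          have htpos : (0:ℝ) < t ^ γ⁻¹ := Real.rpow_pos_of_pos ht _
          have : ‖a‖ ^ γ ≤ (t ^ γ⁻¹) ^ γ :=
            Real.rpow_le_rpow_of_nonpos htpos hcon h0.le
          rw [← Real.rpow_mul ht.le, inv_mul_cancel₀ hγne, Real.rpow_one] at this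
          exact absurd ha (not_lt.2 this)
        calc (volume.restrict (ball (0 : EuclideanSpace ℝ (Fin d)) 1))
              {a | t < ‖a‖ ^ γ}
            ≤ volume (ball (0 : EuclideanSpace ℝ (Fin d)) (t ^ γ⁻¹)) :=
              (Measure.restrict_apply_le _ _).trans (measure_mono hsub)
          _ = ENNReal.ofReal ((t ^ γ⁻¹) ^ Module.finrank ℝ (EuclideanSpace ℝ (Fin d))) * V := by
              rw [Measure.addHaar_ball _ _ (Real.rpow_nonneg ht.le _)]
          _ = ENNReal.ofReal (t ^ ((d : ℝ) * γ⁻¹)) * V := by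
              rw [finrank_euclideanSpace_fin, ← Real.rpow_natCast (t ^ γ⁻¹) d,
                ← Real.rpow_mul ht.le, mul_comm γ⁻¹]
    have hsplit : Ioc (0:ℝ) 1 ∪ Ioi (1:ℝ) = Ioi 0 := Ioc_union_Ioi_eq_Ioi zero_le_one
    rw [← hsplit, lintegral_union measurableSet_Ioi (Ioc_disjoint_Ioi le_rfl)]
    have h1 : ∫⁻ t in Ioc (0:ℝ) 1,
        (volume.restrict (ball (0 : EuclideanSpace ℝ (Fin d)) 1)) {a | t < ‖a‖ ^ γ} < ∞ := by
      calc _ ≤ ∫⁻ _ in Ioc (0:ℝ) 1, V := by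
              refine setLIntegral_mono' measurableSet_Ioc fun t ht => ?_
              exact ((key t ht.1).trans (min_le_left _ _))
        _ = V * volume (Ioc (0:ℝ) 1) := setLIntegral_const _ _
        _ < ∞ := by
            apply ENNReal.mul_lt_top hVlt
            simp [Real.volume_Ioc]
    have h2 : ∫⁻ t in Ioi (1:ℝ),
        (volume.restrict (ball (0 : EuclideanSpace ℝ (Fin d)) 1)) {a | t < ‖a‖ ^ γ} < ∞ := by
      have hinv : γ⁻¹ < 0 := inv_lt_zero.2 h0
      have hexp : (d : ℝ) * γ⁻¹ < -1 := by
        nlinarith [mul_inv_cancel₀ hγne]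
      have hint : IntegrableOn (fun t : ℝ => t ^ ((d:ℝ) * γ⁻¹)) (Ioi (1:ℝ)) :=
        integrableOn_Ioi_rpow_of_lt hexp one_pos
      have hfin : ∫⁻ t in Ioi (1:ℝ), ENNReal.ofReal (t ^ ((d:ℝ) * γ⁻¹)) < ∞ := by
        rw [← hasFiniteIntegral_iff_ofReal]
        · exact hint.2
        · filter_upwards [ae_restrict_mem measurableSet_Ioi] with t ht
          exact Real.rpow_nonneg (le_trans zero_le_one ht.le) _
      calc ∫⁻ t in Ioi (1:ℝ),
            (volume.restrict (ball (0 : EuclideanSpace ℝ (Fin d)) 1)) {a | t < ‖a‖ ^ γ}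
          ≤ ∫⁻ t in Ioi (1:ℝ), ENNReal.ofReal (t ^ ((d:ℝ) * γ⁻¹)) * V := by
            refine setLIntegral_mono' measurableSet_Ioi fun t ht => ?_
            exact (key t (lt_trans one_pos ht)).trans (min_le_right _ _)
        _ = (∫⁻ t in Ioi (1:ℝ), ENNReal.ofReal (t ^ ((d:ℝ) * γ⁻¹))) * V :=
            lintegral_mul_const' V _ hVlt.ne
        _ < ∞ := ENNReal.mul_lt_top hfin hVlt
    exact ENNReal.add_lt_top.2 ⟨h1, h2⟩

lemma weight_decay_lt_top (d : ℕ) (hd : 1 ≤ d) (γ r : ℝ) (hγ : -(d : ℝ) < γ)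
    (hr : (d : ℝ) + max γ 0 < r) :
    ∫⁻ x : EuclideanSpace ℝ (Fin d), ENNReal.ofReal ((1 + ‖x‖) ^ (-r) * ‖x‖ ^ γ) < ∞ := by
  rw [← lintegral_add_compl (μ := volume)
    (fun x : EuclideanSpace ℝ (Fin d) => ENNReal.ofReal ((1 + ‖x‖) ^ (-r) * ‖x‖ ^ γ))
    (measurableSet_ball (x := (0 : EuclideanSpace ℝ (Fin d))) (ε := 1))]
  have hrpos : 0 ≤ r := le_trans (by positivity) hr.le
  have h1 : ∫⁻ x in ball (0 : EuclideanSpace ℝ (Fin d)) 1,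
      ENNReal.ofReal ((1 + ‖x‖) ^ (-r) * ‖x‖ ^ γ) < ∞ := by
    refine lt_of_le_of_lt (setLIntegral_mono' measurableSet_ball fun x _ => ?_)
      (weight_ball_lt_top d hd γ hγ)
    refine ENNReal.ofReal_le_ofReal ?_
    calc (1 + ‖x‖) ^ (-r) * ‖x‖ ^ γ ≤ 1 * ‖x‖ ^ γ := by
          refine mul_le_mul_of_nonneg_right ?_ (Real.rpow_nonneg (norm_nonneg _) _)
          exact Real.rpow_le_one_of_one_le_of_nonpos (by linarith [norm_nonneg x]) (by linarith)
      _ = ‖x‖ ^ γ := one_mul _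
  have h2 : ∫⁻ x in (ball (0 : EuclideanSpace ℝ (Fin d)) 1)ᶜ,
      ENNReal.ofReal ((1 + ‖x‖) ^ (-r) * ‖x‖ ^ γ) < ∞ := by
    have step : ∀ x : EuclideanSpace ℝ (Fin d), x ∈ (ball (0 : EuclideanSpace ℝ (Fin d)) 1)ᶜ →
        ENNReal.ofReal ((1 + ‖x‖) ^ (-r) * ‖x‖ ^ γ) ≤
          ENNReal.ofReal ((1 + ‖x‖) ^ (-(r - max γ 0))) := by
      intro x hx
      have hx1 : (1:ℝ) ≤ ‖x‖ := by
        simpa [mem_ball_zero_iff, not_lt] using hx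
      have hb : (1:ℝ) ≤ 1 + ‖x‖ := by linarith
      refine ENNReal.ofReal_le_ofReal ?_
      show (1 + ‖x‖) ^ (-r) * ‖x‖ ^ γ ≤ (1 + ‖x‖) ^ (-(r - max γ 0))
      have hγle : ‖x‖ ^ γ ≤ (1 + ‖x‖) ^ max γ 0 := by
        rcases le_or_gt 0 γ with hg | hg
        · calc ‖x‖ ^ γ ≤ (1 + ‖x‖) ^ γ :=
                Real.rpow_le_rpow (norm_nonneg _) (by linarith) hg
            _ ≤ (1 + ‖x‖) ^ max γ 0 :=
                Real.rpow_le_rpow_of_exponent_le hb (le_max_left _ _)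
        · calc ‖x‖ ^ γ ≤ 1 := Real.rpow_le_one_of_one_le_of_nonpos hx1 hg.le
            _ ≤ (1 + ‖x‖) ^ max γ 0 :=
                Real.one_le_rpow hb (le_max_right _ _)
      calc (1 + ‖x‖) ^ (-r) * ‖x‖ ^ γ ≤ (1 + ‖x‖) ^ (-r) * (1 + ‖x‖) ^ max γ 0 := by
            refine mul_le_mul_of_nonneg_left hγle (Real.rpow_nonneg (by linarith) _)
        _ = (1 + ‖x‖) ^ (-(r - max γ 0)) := by
            rw [← Real.rpow_add (by linarith : (0:ℝ) < 1 + ‖x‖)]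
            ring_nf
    calc ∫⁻ x in (ball (0 : EuclideanSpace ℝ (Fin d)) 1)ᶜ,
          ENNReal.ofReal ((1 + ‖x‖) ^ (-r) * ‖x‖ ^ γ)
        ≤ ∫⁻ x in (ball (0 : EuclideanSpace ℝ (Fin d)) 1)ᶜ,
            ENNReal.ofReal ((1 + ‖x‖) ^ (-(r - max γ 0))) :=
          setLIntegral_mono' measurableSet_ball.compl step
      _ ≤ ∫⁻ x : EuclideanSpace ℝ (Fin d), ENNReal.ofReal ((1 + ‖x‖) ^ (-(r - max γ 0))) :=
          setLIntegral_le_lintegral _ _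
      _ < ∞ := by
          refine finite_integral_one_add_norm ?_
          rw [finrank_euclideanSpace_fin]
          linarith
  exact ENNReal.add_lt_top.2 ⟨h1, h2⟩

def bmp (d : ℕ) : ContDiffBump (0 : EuclideanSpace ℝ (Fin d)) := ⟨1, 2, one_pos, one_lt_two⟩

/-- the scaling linear map `x ↦ (n+1)⁻¹ • x` -/
def scl (d n : ℕ) : EuclideanSpace ℝ (Fin d) →L[ℝ] EuclideanSpace ℝ (Fin d) :=
  ((n : ℝ) + 1)⁻¹ • ContinuousLinearMap.id ℝ (EuclideanSpace ℝ (Fin d))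

/-- cutoff equal to 1 on the ball of radius `n+1`, supported in ball of radius `2(n+1)` -/
def phiN (d n : ℕ) : EuclideanSpace ℝ (Fin d) → ℝ := fun x => bmp d (scl d n x)

lemma phiN_eq_comp (d n : ℕ) : phiN d n = ⇑(bmp d) ∘ ⇑(scl d n) := rfl

lemma scl_norm_le (d n : ℕ) : ‖scl d n‖ ≤ 1 := by
  refine ContinuousLinearMap.opNorm_le_bound _ zero_le_one fun x => ?_
  show ‖((n : ℝ) + 1)⁻¹ • x‖ ≤ 1 * ‖x‖
  rw [norm_smul, one_mul, Real.norm_eq_abs, abs_of_nonneg (by positivity)]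
  refine mul_le_of_le_one_left (norm_nonneg x) ?_
  rw [inv_le_one_iff₀]
  right
  linarith [Nat.cast_nonneg (α := ℝ) n]

lemma phiN_smooth (d n : ℕ) : ContDiff ℝ ((⊤:ℕ∞) : WithTop ℕ∞) (phiN d n) := by
  rw [phiN_eq_comp]
  exact (bmp d).contDiff.comp (scl d n).contDiff

lemma phiN_nonneg (d n : ℕ) (x : EuclideanSpace ℝ (Fin d)) : 0 ≤ phiN d n x :=
  (bmp d).nonneg

lemma phiN_le_one (d n : ℕ) (x : EuclideanSpace ℝ (Fin d)) : phiN d n x ≤ 1 :=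
  (bmp d).le_one

lemma phiN_eq_one (d n : ℕ) (x : EuclideanSpace ℝ (Fin d)) (hx : ‖x‖ ≤ (n : ℝ) + 1) :
    phiN d n x = 1 := by
  refine (bmp d).one_of_mem_closedBall ?_
  rw [mem_closedBall_zero_iff]
  show ‖((n:ℝ)+1)⁻¹ • x‖ ≤ (bmp d).rIn
  rw [norm_smul, Real.norm_eq_abs, abs_of_nonneg (by positivity)]
  show ((n:ℝ)+1)⁻¹ * ‖x‖ ≤ 1
  rw [inv_mul_le_iff₀ (by positivity)]
  linarith

lemma phiN_eq_zero (d n : ℕ) (x : EuclideanSpace ℝ (Fin d))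
    (hx : 2 * ((n : ℝ) + 1) ≤ ‖x‖) : phiN d n x = 0 := by
  have : scl d n x ∉ support (bmp d) := by
    rw [(bmp d).support_eq, mem_ball_zero_iff]
    show ¬ ‖((n:ℝ)+1)⁻¹ • x‖ < (bmp d).rOut
    rw [norm_smul, Real.norm_eq_abs, abs_of_nonneg (by positivity), not_lt]
    show (2:ℝ) ≤ ((n:ℝ)+1)⁻¹ * ‖x‖
    rw [le_inv_mul_iff₀ (by positivity)]
    linarith
  simpa [phiN, notMem_support] using this

lemma phiN_deriv_bound (d i : ℕ) :
    ∃ B : ℝ, 0 ≤ B ∧ ∀ (n : ℕ) (x : EuclideanSpace ℝ (Fin d)),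
      ‖iteratedFDeriv ℝ i (phiN d n) x‖ ≤ B := by
  obtain ⟨C, hC⟩ := (((bmp d).contDiff (n := (⊤:ℕ∞))).continuous_iteratedFDeriv
    (by exact_mod_cast le_top)).bounded_above_of_compact_support (((bmp d).hasCompactSupport).iteratedFDeriv i)
  refine ⟨max C 0, le_max_right _ _, fun n x => ?_⟩
  have hcomp : iteratedFDeriv ℝ i (phiN d n) x =
      (iteratedFDeriv ℝ i (⇑(bmp d)) (scl d n x)).compContinuousLinearMap
        fun _ => scl d n := by
    rw [phiN_eq_comp]
    exact (scl d n).iteratedFDeriv_comp_right ((bmp d).contDiff (n := (⊤:ℕ∞))) x (by exact_mod_cast le_top)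
  rw [hcomp]
  calc ‖(iteratedFDeriv ℝ i (⇑(bmp d)) (scl d n x)).compContinuousLinearMap
        fun _ => scl d n‖
      ≤ ‖iteratedFDeriv ℝ i (⇑(bmp d)) (scl d n x)‖ * ∏ _j : Fin i, ‖scl d n‖ :=
        ContinuousMultilinearMap.norm_compContinuousLinearMap_le _ _
    _ ≤ max C 0 * 1 := by
        refine mul_le_mul ((hC _).trans (le_max_left _ _)) ?_ (by positivity) (le_max_right _ _)
        calc ∏ _j : Fin i, ‖scl d n‖ ≤ ∏ _j : Fin i, 1 :=
              Finset.prod_le_prod (fun _ _ => norm_nonneg _) (fun _ _ => scl_norm_le d n)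
          _ = 1 := by simp
    _ = max C 0 := mul_one _

lemma phiN_hasTemperateGrowth (d n : ℕ) : Function.HasTemperateGrowth (phiN d n) := by
  refine ⟨phiN_smooth d n, fun i => ?_⟩
  obtain ⟨B, hB0, hB⟩ := phiN_deriv_bound d i
  exact ⟨0, B, fun x => by simpa using hB n x⟩

def vN (d n : ℕ) : 𝓢(EuclideanSpace ℝ (Fin d), ℂ) →L[ℝ] 𝓢(EuclideanSpace ℝ (Fin d), ℂ) :=
  SchwartzMap.bilinLeftCLM ((ContinuousLinearMap.lsmul ℝ ℝ : ℝ →L[ℝ] ℂ →L[ℝ] ℂ).flip)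
    (phiN_hasTemperateGrowth d n)

lemma vN_apply (d n : ℕ) (u : 𝓢(EuclideanSpace ℝ (Fin d), ℂ)) (x : EuclideanSpace ℝ (Fin d)) :
    vN d n u x = phiN d n x • u x := rfl

def wN (d n : ℕ) (u : 𝓢(EuclideanSpace ℝ (Fin d), ℂ)) : 𝓢(EuclideanSpace ℝ (Fin d), ℂ) :=
  u - vN d n u

lemma wN_apply (d n : ℕ) (u : 𝓢(EuclideanSpace ℝ (Fin d), ℂ)) (x : EuclideanSpace ℝ (Fin d)) :
    wN d n u x = (1 - phiN d n x) • u x := by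
  simp [wN, vN_apply, sub_smul, one_smul, SchwartzMap.sub_apply]

lemma cutoff_deriv_bound (d i : ℕ) :
    ∃ B : ℝ, 0 ≤ B ∧ ∀ (n : ℕ) (x : EuclideanSpace ℝ (Fin d)),
      ‖iteratedFDeriv ℝ i (fun y => 1 - phiN d n y) x‖ ≤ B := by
  obtain ⟨B, hB0, hB⟩ := phiN_deriv_bound d i
  refine ⟨max B 1, le_trans zero_le_one (le_max_right _ _), fun n x => ?_⟩
  rcases Nat.eq_zero_or_pos i with hi | hi
  · subst hi
    rw [norm_iteratedFDeriv_zero]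
    refine le_trans ?_ (le_max_right _ _)
    rw [Real.norm_eq_abs, abs_le]
    constructor <;> nlinarith [phiN_nonneg d n x, phiN_le_one d n x]
  · have hrw : (fun y => 1 - phiN d n y) = fun y => (1:ℝ) + (-(phiN d n)) y := by
      funext y; simp [sub_eq_add_neg]
    have heq : iteratedFDeriv ℝ i (fun y => (1:ℝ) + (-(phiN d n)) y) x =
        iteratedFDeriv ℝ i (fun _ => (1:ℝ)) x + iteratedFDeriv ℝ i (-(phiN d n)) x :=
      iteratedFDeriv_add_apply' contDiff_const.contDiffAt
        ((phiN_smooth d n).neg.of_le (by exact_mod_cast le_top)).contDiffAt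
    rw [hrw, heq, iteratedFDeriv_const_of_ne hi.ne', iteratedFDeriv_neg_apply]
    simp only [Pi.zero_apply, zero_add, norm_neg]
    exact le_trans (hB n x) (le_max_left _ _)

lemma wN_seminorm_bound (d : ℕ) (u : 𝓢(EuclideanSpace ℝ (Fin d), ℂ)) (k l : ℕ) :
    ∃ A : ℝ, ∀ n, SchwartzMap.seminorm ℝ k l (wN d n u) ≤ A := by
  choose B hB0 hB using cutoff_deriv_bound d
  refine ⟨∑ i ∈ Finset.range (l + 1),
    (l.choose i : ℝ) * B i * SchwartzMap.seminorm ℝ k (l - i) u, fun n => ?_⟩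
  have hA0 : 0 ≤ ∑ i ∈ Finset.range (l + 1),
      (l.choose i : ℝ) * B i * SchwartzMap.seminorm ℝ k (l - i) u := by
    refine Finset.sum_nonneg fun i _ => ?_
    have h4 : (0:ℝ) ≤ SchwartzMap.seminorm ℝ k (l - i) u :=
      apply_nonneg (SchwartzMap.seminorm ℝ (E := EuclideanSpace ℝ (Fin d)) (F := ℂ) k (l - i)) u
    exact mul_nonneg (mul_nonneg (Nat.cast_nonneg _) (hB0 i)) h4
  refine SchwartzMap.seminorm_le_bound ℝ k l _ hA0 fun x => ?_
  have hcoe : ⇑(wN d n u) = fun y => (1 - phiN d n y) • (u y) := funext (wN_apply d n u)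
  have hderiv : ‖iteratedFDeriv ℝ l (⇑(wN d n u)) x‖ ≤
      ∑ i ∈ Finset.range (l + 1), (l.choose i : ℝ) *
        ‖iteratedFDeriv ℝ i (fun y => 1 - phiN d n y) x‖ *
        ‖iteratedFDeriv ℝ (l - i) (⇑u) x‖ := by
    rw [hcoe]
    exact norm_iteratedFDeriv_smul_le (𝕜 := ℝ) (𝕜' := ℝ)
      (contDiff_const.sub (phiN_smooth d n)) (u.smooth ⊤) x
      (by exact_mod_cast le_top)
  calc ‖x‖ ^ k * ‖iteratedFDeriv ℝ l (⇑(wN d n u)) x‖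
      ≤ ‖x‖ ^ k * ∑ i ∈ Finset.range (l + 1), (l.choose i : ℝ) *
          ‖iteratedFDeriv ℝ i (fun y => 1 - phiN d n y) x‖ *
          ‖iteratedFDeriv ℝ (l - i) (⇑u) x‖ :=
        mul_le_mul_of_nonneg_left hderiv (by positivity)
    _ = ∑ i ∈ Finset.range (l + 1), (l.choose i : ℝ) *
          ‖iteratedFDeriv ℝ i (fun y => 1 - phiN d n y) x‖ *
          (‖x‖ ^ k * ‖iteratedFDeriv ℝ (l - i) (⇑u) x‖) := by
        rw [Finset.mul_sum]; congr 1; funext i; ring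
    _ ≤ ∑ i ∈ Finset.range (l + 1),
          (l.choose i : ℝ) * B i * SchwartzMap.seminorm ℝ k (l - i) u := by
        refine Finset.sum_le_sum fun i _ => ?_
        have h1 := hB i n x
        have h2 := SchwartzMap.le_seminorm ℝ k (l - i) u x
        have h3 : (0:ℝ) ≤ ‖x‖ ^ k * ‖iteratedFDeriv ℝ (l - i) (⇑u) x‖ := by positivity
        exact mul_le_mul (mul_le_mul_of_nonneg_left h1 (Nat.cast_nonneg _)) h2 h3
          (mul_nonneg (Nat.cast_nonneg _) (hB0 i))

lemma decay_bound (d M : ℕ) (u : 𝓢(EuclideanSpace ℝ (Fin d), ℂ)) :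
    ∃ C : ℝ, 0 ≤ C ∧ ∀ (n : ℕ) (x : EuclideanSpace ℝ (Fin d)),
      (1 + ‖x‖) ^ M * ‖(FourierTransform.fourierCLE ℝ 𝓢(EuclideanSpace ℝ (Fin d), ℂ)).symm (wN d n u) x‖ ≤ C := by
  classical
  set T := (FourierTransform.fourierCLE ℝ 𝓢(EuclideanSpace ℝ (Fin d), ℂ)).symm with hT
  choose A hA using fun j : ℕ × ℕ => wN_seminorm_bound d u j.1 j.2
  have hTb : ∀ i : ℕ × ℕ, ∃ Ci : ℝ, 0 ≤ Ci ∧ ∀ n : ℕ,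
      schwartzSeminormFamily ℝ (EuclideanSpace ℝ (Fin d)) ℂ i (T (wN d n u)) ≤ Ci := by
    intro i
    set q : Seminorm ℝ 𝓢(EuclideanSpace ℝ (Fin d), ℂ) :=
      (schwartzSeminormFamily ℝ (EuclideanSpace ℝ (Fin d)) ℂ i).comp
        T.toLinearEquiv.toLinearMap with hq
    have hqc : Continuous q := by
      have h1 : Continuous (schwartzSeminormFamily ℝ (EuclideanSpace ℝ (Fin d)) ℂ i) :=
        (schwartz_withSeminorms ℝ (EuclideanSpace ℝ (Fin d)) ℂ).continuous_seminorm i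
      exact h1.comp T.continuous
    obtain ⟨s, C, hC0, hC⟩ := Seminorm.bound_of_continuous
      (schwartz_withSeminorms ℝ (EuclideanSpace ℝ (Fin d)) ℂ) q hqc
    have hsum0 : (0:ℝ) ≤ ∑ j ∈ s, max (A j) 0 :=
      Finset.sum_nonneg fun j _ => le_max_right _ _
    refine ⟨(C : ℝ) * ∑ j ∈ s, max (A j) 0, by positivity, fun n => ?_⟩
    have h2 := hC (wN d n u)
    rw [hq] at h2
    simp only [Seminorm.comp_apply, Seminorm.smul_apply, NNReal.smul_def, smul_eq_mul] at h2
    refine le_trans h2 ?_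
    refine mul_le_mul_of_nonneg_left ?_ (NNReal.coe_nonneg C)
    refine Seminorm.finset_sup_apply_le hsum0 fun j hj => ?_
    exact (hA j n).trans ((le_max_left _ _).trans
      (Finset.single_le_sum (fun j _ => le_max_right (A j) 0) hj))
  choose Ci hCi0 hCi using hTb
  have hD0 : (0:ℝ) ≤ ∑ i ∈ Finset.Iic (M, 0), Ci i := Finset.sum_nonneg fun i _ => hCi0 i
  refine ⟨2 ^ M * ∑ i ∈ Finset.Iic (M, 0), Ci i, by positivity, fun n x => ?_⟩
  have h := SchwartzMap.one_add_le_sup_seminorm_apply (𝕜 := ℝ) (m := (M, 0)) (k := M) (n := 0)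
    le_rfl le_rfl (T (wN d n u)) x
  rw [norm_iteratedFDeriv_zero] at h
  refine h.trans ?_
  refine mul_le_mul_of_nonneg_left ?_ (by positivity)
  refine Seminorm.finset_sup_apply_le hD0 fun i hi => ?_
  exact (hCi i n).trans (Finset.single_le_sum (fun j _ => hCi0 j) hi)

lemma key_approx (d : ℕ) (hd : 1 ≤ d) (p γ : ℝ) (hp : 1 ≤ p) (hγ : -(d : ℝ) < γ)
    (g : 𝓢(EuclideanSpace ℝ (Fin d), ℂ)) (δ : ℝ≥0∞) (hδ : 0 < δ) :
    ∃ h : 𝓢(EuclideanSpace ℝ (Fin d), ℂ), HasCompactSupport (𝓕 (⇑h)) ∧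
      (∫⁻ x, ENNReal.ofReal (‖g x - h x‖ ^ p * ‖x‖ ^ γ)) < δ := by
  classical
  set T := (FourierTransform.fourierCLE ℝ 𝓢(EuclideanSpace ℝ (Fin d), ℂ)).symm with hT
  set u : 𝓢(EuclideanSpace ℝ (Fin d), ℂ) := FourierTransform.fourierCLE ℝ 𝓢(EuclideanSpace ℝ (Fin d), ℂ) g with hu
  set hn : ℕ → 𝓢(EuclideanSpace ℝ (Fin d), ℂ) := fun n => T (vN d n u) with hhn
  set en : ℕ → 𝓢(EuclideanSpace ℝ (Fin d), ℂ) := fun n => T (wN d n u) with hen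
  have hp0 : (0:ℝ) < p := lt_of_lt_of_le one_pos hp
  have hcoe : ∀ n x, g x - hn n x = en n x := by
    intro n x
    have h0 : en n = g - hn n := by
      have h1 : wN d n u = u - vN d n u := rfl
      rw [hen]
      dsimp only
      rw [h1, map_sub]
      congr 1
      rw [hu, hT]
      exact (FourierTransform.fourierCLE ℝ 𝓢(EuclideanSpace ℝ (Fin d), ℂ)).symm_apply_apply g
    rw [h0, SchwartzMap.sub_apply]
  -- compact support of the Fourier transform of hn
  have hcs : ∀ n, HasCompactSupport (𝓕 (⇑(hn n))) := by
    intro n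
    have h2 : FourierTransform.fourierCLE ℝ 𝓢(EuclideanSpace ℝ (Fin d), ℂ) (hn n) = vN d n u := by
      rw [hhn]
      dsimp only
      rw [hT]
      exact (FourierTransform.fourierCLE ℝ 𝓢(EuclideanSpace ℝ (Fin d), ℂ)).apply_symm_apply _
    have h1 : 𝓕 (⇑(hn n)) = ⇑(vN d n u) := by
      rw [← SchwartzMap.fourier_coe, ← SchwartzMap.fourierTransformCLE_apply (R := ℝ) (hn n), h2]
    rw [h1]
    refine HasCompactSupport.intro (K := closedBall 0 (2 * ((n:ℝ)+1)))
      (isCompact_closedBall _ _) fun x hx => ?_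
    rw [vN_apply, phiN_eq_zero d n x ?_, zero_smul]
    rw [mem_closedBall_zero_iff, not_le] at hx
    exact hx.le
  -- uniform decay bound
  set M : ℕ := d + ⌈max γ 0⌉₊ + 1 with hM
  obtain ⟨C, hC0, hC⟩ := decay_bound d M u
  set D : ℝ := max C 1 with hD
  have hD1 : (1:ℝ) ≤ D := le_max_right _ _
  have hD0 : (0:ℝ) < D := lt_of_lt_of_le one_pos hD1
  -- dominating function
  set G : EuclideanSpace ℝ (Fin d) → ℝ≥0∞ :=
    fun x => ENNReal.ofReal (D ^ p * ((1 + ‖x‖) ^ (-((M : ℝ) * p)) * ‖x‖ ^ γ)) with hG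
  have hMr : (d : ℝ) + max γ 0 < (M : ℝ) * p := by
    have h1 : (d : ℝ) + max γ 0 < (M : ℝ) := by
      rw [hM]
      push_cast
      have := Nat.le_ceil (max γ 0)
      linarith
    have h2 : (M : ℝ) ≤ (M : ℝ) * p := le_mul_of_one_le_right (Nat.cast_nonneg _) hp
    linarith
  have hGfin : ∫⁻ x, G x < ∞ := by
    have heq : ∫⁻ x, G x = ENNReal.ofReal (D ^ p) *
        ∫⁻ x : EuclideanSpace ℝ (Fin d),
          ENNReal.ofReal ((1 + ‖x‖) ^ (-((M : ℝ) * p)) * ‖x‖ ^ γ) := by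
      rw [← lintegral_const_mul' _ _ ENNReal.ofReal_ne_top]
      refine lintegral_congr fun x => ?_
      simp only [hG]
      exact ENNReal.ofReal_mul (by positivity)
    rw [heq]
    exact ENNReal.mul_lt_top ENNReal.ofReal_lt_top (weight_decay_lt_top d hd γ _ hγ hMr)
  -- pointwise domination
  have hdom : ∀ n x, ENNReal.ofReal (‖en n x‖ ^ p * ‖x‖ ^ γ) ≤ G x := by
    intro n x
    have hb : (0:ℝ) < 1 + ‖x‖ := by positivity
    have hpow : (0:ℝ) < (1 + ‖x‖) ^ ((M:ℕ):ℝ) := Real.rpow_pos_of_pos hb _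
    have h1 : ‖en n x‖ ≤ D * (1 + ‖x‖) ^ (-((M:ℕ):ℝ)) := by
      have h2 : (1 + ‖x‖) ^ ((M:ℕ):ℝ) * ‖en n x‖ ≤ D := by
        rw [Real.rpow_natCast]
        exact (hC n x).trans (le_max_left _ _)
      rw [Real.rpow_neg hb.le, ← div_eq_mul_inv, le_div_iff₀ hpow, mul_comm]
      exact h2
    refine ENNReal.ofReal_le_ofReal ?_
    calc ‖en n x‖ ^ p * ‖x‖ ^ γ
        ≤ (D * (1 + ‖x‖) ^ (-((M:ℕ):ℝ))) ^ p * ‖x‖ ^ γ :=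
          mul_le_mul_of_nonneg_right (Real.rpow_le_rpow (norm_nonneg _) h1 hp0.le)
            (Real.rpow_nonneg (norm_nonneg _) _)
      _ = D ^ p * ((1 + ‖x‖) ^ (-((M : ℝ) * p)) * ‖x‖ ^ γ) := by
          rw [Real.mul_rpow hD0.le (Real.rpow_nonneg hb.le _),
            ← Real.rpow_mul hb.le, neg_mul, mul_assoc]
  -- uniform bound by the L¹ norm of wN
  have hnorm : ∀ (w : 𝓢(EuclideanSpace ℝ (Fin d), ℂ)) x, ‖(T w) x‖ ≤ ∫ ξ, ‖w ξ‖ := by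
    intro w x
    have h1 : ⇑(T w) = 𝓕⁻ ⇑w := by
      rw [hT]
      rw [SchwartzMap.fourierTransformCLE_symm_apply (R := ℝ) w]; exact SchwartzMap.fourierInv_coe w
    rw [h1]
    exact VectorFourier.norm_fourierIntegral_le_integral_norm _ _ _ _ _
  -- the L¹ norms tend to zero
  have haN : Tendsto (fun n => ∫ ξ, ‖wN d n u ξ‖) atTop (𝓝 0) := by
    have hconc := tendsto_integral_of_dominated_convergence (μ := volume)
      (F := fun n ξ => ‖wN d n u ξ‖) (f := fun _ => (0:ℝ)) (fun ξ => ‖u ξ‖)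
      (fun n => ((wN d n u).continuous.norm).aestronglyMeasurable)
      u.integrable.norm
      (fun n => Filter.Eventually.of_forall fun ξ => ?_)
      (Filter.Eventually.of_forall fun ξ => ?_)
    · simpa using hconc
    · rw [norm_norm, wN_apply, norm_smul, Real.norm_eq_abs]
      have h3 : |1 - phiN d n ξ| ≤ 1 := by
        rw [abs_le]
        constructor <;> nlinarith [phiN_nonneg d n ξ, phiN_le_one d n ξ]
      calc |1 - phiN d n ξ| * ‖u ξ‖ ≤ 1 * ‖u ξ‖ :=
            mul_le_mul_of_nonneg_right h3 (norm_nonneg _)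
        _ = ‖u ξ‖ := one_mul _
    · have hev : ∀ᶠ n in atTop, ‖wN d n u ξ‖ = 0 := by
        refine eventually_atTop.2 ⟨⌈‖ξ‖⌉₊, fun n hn' => ?_⟩
        have h4 : ‖ξ‖ ≤ (n : ℝ) + 1 := by
          calc ‖ξ‖ ≤ (⌈‖ξ‖⌉₊ : ℝ) := Nat.le_ceil _
            _ ≤ (n : ℝ) := Nat.cast_le.2 hn'
            _ ≤ (n : ℝ) + 1 := by linarith
        rw [wN_apply, phiN_eq_one d n ξ h4, sub_self, zero_smul, norm_zero]
      exact Tendsto.congr' (Filter.EventuallyEq.symm hev) tendsto_const_nhds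
  -- pointwise convergence of the integrands
  have hptt : ∀ x, Tendsto (fun n => ENNReal.ofReal (‖en n x‖ ^ p * ‖x‖ ^ γ)) atTop (𝓝 0) := by
    intro x
    have h1 : Tendsto (fun n => ‖en n x‖) atTop (𝓝 0) :=
      squeeze_zero (fun n => norm_nonneg _) (fun n => hnorm (wN d n u) x) haN
    have h2 : Tendsto (fun n => ‖en n x‖ ^ p * ‖x‖ ^ γ) atTop (𝓝 0) := by
      have h3 := (h1.rpow_const (Or.inr hp0.le)).mul_const (‖x‖ ^ γ)
      rwa [Real.zero_rpow hp0.ne', zero_mul] at h3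
    have h4 := ENNReal.tendsto_ofReal h2
    rwa [ENNReal.ofReal_zero] at h4
  -- measurability
  have hmeas : ∀ n, Measurable fun x => ENNReal.ofReal (‖en n x‖ ^ p * ‖x‖ ^ γ) := by
    intro n
    have hc : Continuous (⇑(en n)) := (en n).continuous
    fun_prop
  -- dominated convergence
  have htend : Tendsto (fun n => ∫⁻ x, ENNReal.ofReal (‖en n x‖ ^ p * ‖x‖ ^ γ))
      atTop (𝓝 0) := by
    have hconc := tendsto_lintegral_of_dominated_convergence (μ := volume)
      (F := fun n x => ENNReal.ofReal (‖en n x‖ ^ p * ‖x‖ ^ γ)) (f := fun _ => 0) G hmeas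
      (fun n => Filter.Eventually.of_forall (hdom n)) hGfin.ne
      (Filter.Eventually.of_forall hptt)
    simpa using hconc
  obtain ⟨n, hfin⟩ := (htend.eventually (Iio_mem_nhds hδ)).exists
  refine ⟨hn n, hcs n, ?_⟩
  calc ∫⁻ x, ENNReal.ofReal (‖g x - hn n x‖ ^ p * ‖x‖ ^ γ)
      = ∫⁻ x, ENNReal.ofReal (‖en n x‖ ^ p * ‖x‖ ^ γ) :=
        lintegral_congr fun x => by rw [hcoe]
    _ < δ := hfin

/-- If Schwartz functions are dense in the weighted space `L^p(ℝ^d, |x|^γ)`, then so are the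
Schwartz functions whose Fourier transform has compact support. -/
theorem dense_schwartz_compact_fourier_support (d : ℕ) (hd : 1 ≤ d) (p γ : ℝ)
    (hp : 1 ≤ p) (hγ : -(d : ℝ) < γ)
    (hdense : ∀ f : EuclideanSpace ℝ (Fin d) → ℂ, Measurable f →
      (∫⁻ x, ENNReal.ofReal (‖f x‖ ^ p * ‖x‖ ^ γ)) < ∞ → ∀ ε : ℝ, 0 < ε →
      ∃ g : SchwartzMap (EuclideanSpace ℝ (Fin d)) ℂ,
        (∫⁻ x, ENNReal.ofReal (‖f x - g x‖ ^ p * ‖x‖ ^ γ)) ^ (1 / p) < ENNReal.ofReal ε) :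
    ∀ f : EuclideanSpace ℝ (Fin d) → ℂ, Measurable f →
      (∫⁻ x, ENNReal.ofReal (‖f x‖ ^ p * ‖x‖ ^ γ)) < ∞ → ∀ ε : ℝ, 0 < ε →
      ∃ g : SchwartzMap (EuclideanSpace ℝ (Fin d)) ℂ,
        HasCompactSupport (𝓕 (⇑g)) ∧
        (∫⁻ x, ENNReal.ofReal (‖f x - g x‖ ^ p * ‖x‖ ^ γ)) ^ (1 / p) < ENNReal.ofReal ε := by
  intro f hf hfin ε hε
  have hp0 : (0:ℝ) < p := lt_of_lt_of_le one_pos hp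
  obtain ⟨g, hg⟩ := hdense f hf hfin (ε/2) (half_pos hε)
  have hδpos : (0:ℝ≥0∞) < ENNReal.ofReal (ε/2) ^ p :=
    ENNReal.rpow_pos (ENNReal.ofReal_pos.2 (half_pos hε)) ENNReal.ofReal_ne_top
  obtain ⟨h, hcs, hlt⟩ := key_approx d hd p γ hp hγ g _ hδpos
  refine ⟨h, hcs, ?_⟩
  set μ : Measure (EuclideanSpace ℝ (Fin d)) :=
    volume.withDensity (fun x => ENNReal.ofReal (‖x‖ ^ γ)) with hμ
  set q : ℝ≥0∞ := ENNReal.ofReal p with hq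
  have hq0 : q ≠ 0 := by
    rw [hq]
    simp [ENNReal.ofReal_eq_zero, not_le, hp0]
  have hqt : q ≠ ∞ := ENNReal.ofReal_ne_top
  have hqr : q.toReal = p := ENNReal.toReal_ofReal hp0.le
  have hq1 : 1 ≤ q := by
    rw [hq, ENNReal.one_le_ofReal]
    exact hp
  have hwmeas : Measurable fun x : EuclideanSpace ℝ (Fin d) => ENNReal.ofReal (‖x‖ ^ γ) := by
    fun_prop
  have key : ∀ F G : EuclideanSpace ℝ (Fin d) → ℂ,
      (∫⁻ x, ENNReal.ofReal (‖F x - G x‖ ^ p * ‖x‖ ^ γ)) ^ (1/p) = eLpNorm (F - G) q μ := by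
    intro F G
    rw [eLpNorm_eq_lintegral_rpow_enorm_toReal hq0 hqt, hqr, hμ,
      lintegral_withDensity_eq_lintegral_mul_non_measurable _ hwmeas
        (Filter.Eventually.of_forall fun x => ENNReal.ofReal_lt_top)]
    congr 1
    refine lintegral_congr fun x => ?_
    simp only [Pi.mul_apply, Pi.sub_apply]
    rw [ENNReal.ofReal_mul (by positivity), mul_comm]
    congr 1
    rw [← ofReal_norm_eq_enorm, ENNReal.ofReal_rpow_of_nonneg (norm_nonneg _) hp0.le]
  have hmf : AEStronglyMeasurable f μ := hf.aestronglyMeasurable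
  have hmg : AEStronglyMeasurable (⇑g) μ := g.continuous.aestronglyMeasurable
  have hmh : AEStronglyMeasurable (⇑h) μ := h.continuous.aestronglyMeasurable
  have htri : eLpNorm (f - ⇑h) q μ ≤ eLpNorm (f - ⇑g) q μ + eLpNorm (⇑g - ⇑h) q μ := by
    have hfh : f - ⇑h = (f - ⇑g) + (⇑g - ⇑h) := by
      funext x; simp
    rw [hfh]
    exact eLpNorm_add_le (hmf.sub hmg) (hmg.sub hmh) hq1
  have h1 : eLpNorm (f - ⇑g) q μ < ENNReal.ofReal (ε/2) := by
    rw [← key f (⇑g)]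
    exact hg
  have h2 : eLpNorm (⇑g - ⇑h) q μ < ENNReal.ofReal (ε/2) := by
    rw [← key (⇑g) (⇑h)]
    have h3 : (∫⁻ x, ENNReal.ofReal (‖g x - h x‖ ^ p * ‖x‖ ^ γ)) ^ (1/p) <
        (ENNReal.ofReal (ε/2) ^ p) ^ (1/p) :=
      ENNReal.rpow_lt_rpow hlt (by positivity)
    rwa [← ENNReal.rpow_mul, mul_one_div_cancel hp0.ne', ENNReal.rpow_one] at h3
  calc (∫⁻ x, ENNReal.ofReal (‖f x - h x‖ ^ p * ‖x‖ ^ γ)) ^ (1/p)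
      = eLpNorm (f - ⇑h) q μ := key f (⇑h)
    _ ≤ eLpNorm (f - ⇑g) q μ + eLpNorm (⇑g - ⇑h) q μ := htri
    _ < ENNReal.ofReal (ε/2) + ENNReal.ofReal (ε/2) := ENNReal.add_lt_add h1 h2
    _ = ENNReal.ofReal ε := by
        rw [← ENNReal.ofReal_add (by positivity) (by positivity), add_halves]
end
end

section
/- Let d ≥ 2, 0 < s_0 < d, a ∈ (s_0, d), b > 0, and define the radial function g(x) = |x|^{−a} (log(1/|x|))^{−b} for 0 < |x| ≤ 1/2 and g = 0 otherwise. Then the Riesz potential f = (−Δ)^{−s_0/2} g satisfies the pointwise lower bound f(x) ≥ C |x|^{s_0 − a} (log(2/|x|))^{−b} for all 0 < |x| ≤ 1/2, with a constant C > 0. -/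
open MeasureTheory ENNReal NNReal Metric Set Filter

set_option maxHeartbeats 1000000

noncomputable section

lemma aux_int (d : ℕ) (hd : 0 < d) (p R : ℝ) (hp : -(d:ℝ) < p) (hp0 : p < 0) (hR : 0 < R) :
    IntegrableOn (fun y : EuclideanSpace ℝ (Fin d) => ‖y‖ ^ p) (closedBall 0 R) := by
  have hmeas : Measurable (fun y : EuclideanSpace ℝ (Fin d) => ‖y‖ ^ p) := by fun_prop
  refine ⟨hmeas.aestronglyMeasurable, ?_⟩
  rw [hasFiniteIntegral_iff_ofReal
    (Eventually.of_forall fun y => Real.rpow_nonneg (norm_nonneg y) p)]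
  set u : ℝ := (1/2 : ℝ) with hu
  have hu0 : (0:ℝ) < u := by norm_num
  have hu1 : u < 1 := by norm_num
  set A : ℕ → Set (EuclideanSpace ℝ (Fin d)) :=
    fun n => closedBall 0 (R * u ^ n) \ closedBall 0 (R * u ^ (n+1)) with hA
  have hcover : closedBall (0 : EuclideanSpace ℝ (Fin d)) R ⊆ {0} ∪ ⋃ n, A n := by
    intro y hy
    rcases eq_or_ne y 0 with h0 | h0
    · exact Or.inl h0
    refine Or.inr ?_
    have hy0 : 0 < ‖y‖ := norm_pos_iff.2 h0
    have hex : ∃ n : ℕ, R * u ^ (n+1) < ‖y‖ := by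
      obtain ⟨n, hn⟩ := exists_pow_lt_of_lt_one (div_pos hy0 hR) hu1
      have h1 : R * u ^ n < ‖y‖ := by
        have h := mul_lt_mul_of_pos_left hn hR
        have hc : R * (‖y‖ / R) = ‖y‖ := by field_simp
        rwa [hc] at h
      have h2 : u ^ (n+1) ≤ u ^ n := pow_le_pow_of_le_one hu0.le hu1.le (Nat.le_succ n)
      exact ⟨n, by nlinarith⟩
    refine mem_iUnion.2 ⟨Nat.find hex, ?_, ?_⟩
    · rw [mem_closedBall_zero_iff]
      rcases Nat.eq_zero_or_pos (Nat.find hex) with h | h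
      · rw [h]; simpa using mem_closedBall_zero_iff.1 (by simpa using hy)
      · have hm : Nat.find hex - 1 < Nat.find hex := by omega
        have h2 := Nat.find_min hex hm
        push_neg at h2
        have heq : Nat.find hex - 1 + 1 = Nat.find hex := by omega
        rwa [heq] at h2
    · rw [mem_closedBall_zero_iff]
      push_neg
      exact Nat.find_spec hex
  set V := volume (ball (0 : EuclideanSpace ℝ (Fin d)) 1) with hV
  have hVlt : V < ⊤ := measure_ball_lt_top
  set w : ℝ := u ^ (p + d) with hw
  have hw0 : 0 < w := Real.rpow_pos_of_pos hu0 _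
  have hw1 : w < 1 := Real.rpow_lt_one hu0.le hu1 (by linarith)
  set K : ℝ := R ^ p * u ^ p * R ^ (d:ℕ) with hK
  have hterm : ∀ n : ℕ, ∫⁻ y in A n, ENNReal.ofReal (‖y‖ ^ p) ≤
      ENNReal.ofReal (K * w ^ n) * V := by
    intro n
    have hρ1 : 0 < R * u ^ (n+1) := by positivity
    have hb : ∀ y ∈ A n, ENNReal.ofReal (‖y‖ ^ p) ≤
        ENNReal.ofReal ((R * u ^ (n+1)) ^ p) := by
      intro y hy
      apply ENNReal.ofReal_le_ofReal
      have h1 : R * u ^ (n+1) ≤ ‖y‖ := by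
        have := hy.2
        rw [mem_closedBall_zero_iff] at this
        push_neg at this
        exact this.le
      exact Real.rpow_le_rpow_of_nonpos hρ1 h1 hp0.le
    calc ∫⁻ y in A n, ENNReal.ofReal (‖y‖ ^ p)
        ≤ ∫⁻ _ in A n, ENNReal.ofReal ((R * u ^ (n+1)) ^ p) :=
          setLIntegral_mono measurable_const hb
      _ = ENNReal.ofReal ((R * u ^ (n+1)) ^ p) * volume (A n) := setLIntegral_const _ _
      _ ≤ ENNReal.ofReal ((R * u ^ (n+1)) ^ p) *
          (ENNReal.ofReal ((R * u ^ n) ^ (d:ℕ)) * V) := by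
          gcongr
          calc volume (A n) ≤ volume (closedBall (0 : EuclideanSpace ℝ (Fin d)) (R * u ^ n)) :=
                measure_mono diff_subset
            _ = ENNReal.ofReal ((R * u ^ n) ^ Module.finrank ℝ (EuclideanSpace ℝ (Fin d))) * V :=
                Measure.addHaar_closedBall _ _ (by positivity)
            _ = _ := by rw [finrank_euclideanSpace_fin]
      _ = ENNReal.ofReal (K * w ^ n) * V := by
          rw [← mul_assoc, ← ENNReal.ofReal_mul (by positivity)]
          congr 2
          have e1 : (R * u ^ (n+1)) ^ p = R ^ p * (u ^ p) * (u ^ p) ^ n := by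
            rw [Real.mul_rpow hR.le (by positivity), ← Real.rpow_natCast u (n+1),
              ← Real.rpow_mul hu0.le, ← Real.rpow_natCast (u ^ p) n,
              ← Real.rpow_mul hu0.le, mul_assoc, ← Real.rpow_add hu0]
            congr 1
            push_cast; ring
          have e2 : (R * u ^ n) ^ (d:ℕ) = R ^ (d:ℕ) * ((u ^ (d:ℝ)) ^ n) := by
            rw [mul_pow]
            congr 1
            rw [← Real.rpow_natCast u n, ← Real.rpow_natCast (u ^ ((n:ℕ):ℝ)) d,
              ← Real.rpow_mul hu0.le, ← Real.rpow_natCast (u ^ (d:ℝ)) n,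
              ← Real.rpow_mul hu0.le]
            congr 1; ring
          have e3 : (u ^ (p + (d:ℝ))) ^ n = (u ^ p) ^ n * (u ^ (d:ℝ)) ^ n := by
            rw [← mul_pow, ← Real.rpow_add hu0]
          rw [e1, e2, hK, hw, e3]
          ring
  calc ∫⁻ y in closedBall (0 : EuclideanSpace ℝ (Fin d)) R, ENNReal.ofReal (‖y‖ ^ p)
      ≤ ∫⁻ y in ({0} : Set (EuclideanSpace ℝ (Fin d))) ∪ ⋃ n, A n,
          ENNReal.ofReal (‖y‖ ^ p) := lintegral_mono_set hcover
    _ ≤ (∫⁻ y in ({0} : Set (EuclideanSpace ℝ (Fin d))), ENNReal.ofReal (‖y‖ ^ p)) +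
        ∫⁻ y in ⋃ n, A n, ENNReal.ofReal (‖y‖ ^ p) := lintegral_union_le _ _ _
    _ ≤ 0 + ∑' n, ∫⁻ y in A n, ENNReal.ofReal (‖y‖ ^ p) := by
        gcongr
        · rw [lintegral_singleton]
          simp [Real.zero_rpow hp0.ne]
        · exact lintegral_iUnion_le _ _
    _ ≤ ∑' n, ENNReal.ofReal (K * w ^ n) * V := by
        rw [zero_add]; exact ENNReal.tsum_le_tsum hterm
    _ < ⊤ := by
        have : ∀ n : ℕ, ENNReal.ofReal (K * w ^ n) * V =
            (ENNReal.ofReal K * V) * (ENNReal.ofReal w) ^ n := by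
          intro n
          rw [ENNReal.ofReal_mul' (by positivity), ENNReal.ofReal_pow hw0.le]
          ring
        simp_rw [this]
        rw [ENNReal.tsum_mul_left, ENNReal.tsum_geometric]
        apply ENNReal.mul_lt_top
        · exact ENNReal.mul_lt_top ENNReal.ofReal_lt_top hVlt
        · rw [lt_top_iff_ne_top]
          simp only [ne_eq, ENNReal.inv_eq_top, tsub_eq_zero_iff_le, not_le]
          exact ENNReal.ofReal_lt_one.2 hw1

lemma aux_int_center (d : ℕ) (hd : 0 < d) (p R : ℝ) (hp : -(d:ℝ) < p) (hp0 : p < 0) (hR : 0 < R)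
    (x : EuclideanSpace ℝ (Fin d)) :
    IntegrableOn (fun y : EuclideanSpace ℝ (Fin d) => ‖x - y‖ ^ p) (closedBall x R) := by
  have h0 : Integrable ((closedBall (0 : EuclideanSpace ℝ (Fin d)) R).indicator
      fun z => ‖z‖ ^ p) :=
    (integrable_indicator_iff measurableSet_closedBall).2 (aux_int d hd p R hp hp0 hR)
  have h1 := h0.comp_sub_left x
  have h2 : (fun t => ((closedBall (0 : EuclideanSpace ℝ (Fin d)) R).indicator
      (fun z => ‖z‖ ^ p)) (x - t)) =
      (closedBall x R).indicator (fun t => ‖x - t‖ ^ p) := by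
    funext t
    by_cases ht : t ∈ closedBall x R
    · have hmem : x - t ∈ closedBall (0 : EuclideanSpace ℝ (Fin d)) R := by
        rw [mem_closedBall_zero_iff]
        rw [mem_closedBall, dist_eq_norm, ← norm_sub_rev] at ht
        exact ht
      rw [indicator_of_mem hmem, indicator_of_mem ht]
    · have hmem : x - t ∉ closedBall (0 : EuclideanSpace ℝ (Fin d)) R := by
        rw [mem_closedBall_zero_iff]
        rw [mem_closedBall, dist_eq_norm, ← norm_sub_rev] at ht
        exact ht
      rw [indicator_of_notMem hmem, indicator_of_notMem ht]
  rw [h2] at h1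
  exact (integrable_indicator_iff measurableSet_closedBall).1 h1

/-- Pointwise lower bound for the Riesz potential of
`g(x) = |x|^{-a} (log(1/|x|))^{-b} 𝟙_{0<|x|≤1/2}` in dimension `d ≥ 2`:
`(-Δ)^{-s_0/2} g (x) ≥ C |x|^{s_0-a} (log(2/|x|))^{-b}` for `0 < |x| ≤ 1/2`. -/
theorem riesz_potential_lower_bound (d : ℕ) (hd : 2 ≤ d) (s0 a b c : ℝ)
    (hs0 : 0 < s0) (hs0d : s0 < d) (ha : s0 < a) (had : a < d) (hb : 0 < b) (hc : 0 < c)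
    (g : EuclideanSpace ℝ (Fin d) → ℝ)
    (hg : ∀ x, g x = if 0 < ‖x‖ ∧ ‖x‖ ≤ 1 / 2 then
        ‖x‖ ^ (-a) * Real.log (1 / ‖x‖) ^ (-b) else 0) :
    ∃ C : ℝ, 0 < C ∧ ∀ x : EuclideanSpace ℝ (Fin d), 0 < ‖x‖ → ‖x‖ ≤ 1 / 2 →
      C * ‖x‖ ^ (s0 - a) * Real.log (2 / ‖x‖) ^ (-b) ≤
        c * ∫ y, ‖x - y‖ ^ (s0 - (d : ℝ)) * g y := by
  have hd0 : 0 < d := by omega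
  have hdr : (0:ℝ) < d := by exact_mod_cast hd0
  set V := volume (ball (0 : EuclideanSpace ℝ (Fin d)) 1) with hV
  set Vr := V.toReal with hVr
  have hVrpos : 0 < Vr :=
    ENNReal.toReal_pos (measure_ball_pos _ _ one_pos).ne' measure_ball_lt_top.ne
  have ha0 : 0 < a := lt_trans hs0 ha
  have hlog2 : (0:ℝ) < Real.log 2 := Real.log_pos one_lt_two
  -- nonnegativity of g
  have hg0 : ∀ y, 0 ≤ g y := by
    intro y
    rw [hg]
    split
    · rename_i h
      refine mul_nonneg (Real.rpow_nonneg (norm_nonneg _) _) (Real.rpow_nonneg ?_ _)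
      exact Real.log_nonneg (one_le_one_div h.1 (le_trans h.2 (by norm_num)))
    · exact le_refl 0
  have hgmeas : Measurable g := by
    have : g = fun y => if 0 < ‖y‖ ∧ ‖y‖ ≤ 1 / 2 then
        ‖y‖ ^ (-a) * Real.log (1 / ‖y‖) ^ (-b) else 0 := funext hg
    rw [this]
    have m1 : Measurable fun y : EuclideanSpace ℝ (Fin d) => ‖y‖ ^ (-a) := by fun_prop
    have m3 : Measurable fun t : ℝ => t ^ (-b) := by fun_prop
    have m2 : Measurable fun y : EuclideanSpace ℝ (Fin d) =>
        Real.log (1/‖y‖) ^ (-b) :=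
      m3.comp (Real.measurable_log.comp (measurable_const.div measurable_norm))
    apply Measurable.ite
    · exact (measurableSet_lt measurable_const measurable_norm).inter
        (measurableSet_le measurable_norm measurable_const)
    · exact m1.mul m2
    · exact measurable_const
  -- upper bound for g
  have hgle : ∀ y : EuclideanSpace ℝ (Fin d), g y ≤ Real.log 2 ^ (-b) * ‖y‖ ^ (-a) := by
    intro y
    rw [hg]
    split
    · rename_i h
      have hl2 : Real.log 2 ≤ Real.log (1/‖y‖) := by
        apply Real.log_le_log (by norm_num)
        rw [le_div_iff₀ h.1]
        linarith [h.2]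
      have b2 : Real.log (1/‖y‖) ^ (-b) ≤ Real.log 2 ^ (-b) :=
        Real.rpow_le_rpow_of_nonpos hlog2 hl2 (by linarith)
      calc ‖y‖ ^ (-a) * Real.log (1/‖y‖) ^ (-b)
          ≤ ‖y‖ ^ (-a) * Real.log 2 ^ (-b) :=
            mul_le_mul_of_nonneg_left b2 (Real.rpow_nonneg (norm_nonneg _) _)
        _ = Real.log 2 ^ (-b) * ‖y‖ ^ (-a) := mul_comm _ _
    · exact mul_nonneg (Real.rpow_nonneg hlog2.le _) (Real.rpow_nonneg (norm_nonneg _) _)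
  refine ⟨c * (Vr * (1/4:ℝ) ^ (d:ℝ) * (3/4:ℝ) ^ (s0 - (d:ℝ)) * (2:ℝ) ^ (-b)), ?_, ?_⟩
  · apply _root_.mul_pos hc
    apply _root_.mul_pos (_root_.mul_pos
      (_root_.mul_pos hVrpos (Real.rpow_pos_of_pos (by norm_num) _))
      (Real.rpow_pos_of_pos (by norm_num) _))
    exact Real.rpow_pos_of_pos (by norm_num) _
  intro x hx hx2
  set r := ‖x‖ with hr
  set z := s0 - (d:ℝ) with hz
  have hz0 : z < 0 := by simp [hz]; linarith
  have hzd : -(d:ℝ) < z := by simp [hz]; linarith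
  set H : EuclideanSpace ℝ (Fin d) → ℝ := fun y => ‖x - y‖ ^ z * g y with hH
  have hkermeas : Measurable (fun y : EuclideanSpace ℝ (Fin d) => ‖x - y‖ ^ z) := by fun_prop
  have hHmeas : Measurable H := hkermeas.mul hgmeas
  have hH0 : ∀ y, 0 ≤ H y := fun y =>
    mul_nonneg (Real.rpow_nonneg (norm_nonneg _) _) (hg0 y)
  -- integrability near x
  have hker : IntegrableOn (fun y : EuclideanSpace ℝ (Fin d) => ‖x - y‖ ^ z)
      (closedBall x (r/2)) := aux_int_center d hd0 z (r/2) hzd hz0 (by positivity) x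
  have I1 : IntegrableOn H (closedBall x (r/2)) := by
    set M1 : ℝ := (r/2) ^ (-a) * Real.log 2 ^ (-b) with hM1
    have hM1nn : 0 ≤ M1 :=
      mul_nonneg (Real.rpow_nonneg (by positivity) _) (Real.rpow_nonneg hlog2.le _)
    apply Integrable.mono' (hker.const_mul M1) (hHmeas.aestronglyMeasurable.restrict)
    filter_upwards [ae_restrict_mem measurableSet_closedBall] with y hy
    have hyn : r/2 ≤ ‖y‖ := by
      rw [mem_closedBall, dist_eq_norm] at hy
      have h2 := abs_norm_sub_norm_le x y
      rw [← norm_sub_rev y x] at h2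
      rw [abs_le] at h2
      linarith [h2.1]
    have hgy : g y ≤ M1 := by
      rw [hg]
      split
      · rename_i h
        have b1 : ‖y‖ ^ (-a) ≤ (r/2) ^ (-a) :=
          Real.rpow_le_rpow_of_nonpos (by positivity) hyn (by linarith)
        have hl2 : Real.log 2 ≤ Real.log (1/‖y‖) := by
          apply Real.log_le_log (by norm_num)
          rw [le_div_iff₀ h.1]
          linarith [h.2]
        have b2 : Real.log (1/‖y‖) ^ (-b) ≤ Real.log 2 ^ (-b) :=
          Real.rpow_le_rpow_of_nonpos hlog2 hl2 (by linarith)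
        exact mul_le_mul b1 b2
          (Real.rpow_nonneg (Real.log_nonneg (one_le_one_div h.1
            (le_trans h.2 (by norm_num)))) _)
          (Real.rpow_nonneg (by positivity) _)
      · exact hM1nn
    rw [Real.norm_eq_abs, abs_of_nonneg (hH0 y)]
    calc H y = ‖x - y‖ ^ z * g y := rfl
      _ ≤ ‖x - y‖ ^ z * M1 :=
          mul_le_mul_of_nonneg_left hgy (Real.rpow_nonneg (norm_nonneg _) _)
      _ = M1 * ‖x - y‖ ^ z := mul_comm _ _
  -- integrability away from x
  have I2 : IntegrableOn H (closedBall 0 (1/2) \ closedBall x (r/2)) := by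
    set M2 : ℝ := (r/2) ^ z with hM2
    have hbase : IntegrableOn (fun y : EuclideanSpace ℝ (Fin d) => ‖y‖ ^ (-a))
        (closedBall 0 (1/2)) :=
      aux_int d hd0 (-a) (1/2) (by linarith) (by linarith) (by norm_num)
    have hbase2 : IntegrableOn (fun y : EuclideanSpace ℝ (Fin d) =>
        M2 * Real.log 2 ^ (-b) * ‖y‖ ^ (-a)) (closedBall 0 (1/2)) :=
      hbase.const_mul _
    apply Integrable.mono' (hbase2.mono_set diff_subset)
      (hHmeas.aestronglyMeasurable.restrict)
    filter_upwards [ae_restrict_mem (measurableSet_closedBall.diff measurableSet_closedBall)]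
      with y hy
    have hxy : r/2 ≤ ‖x - y‖ := by
      have := hy.2
      rw [mem_closedBall, dist_eq_norm] at this
      push_neg at this
      rw [← norm_sub_rev y x]
      exact this.le
    have hker2 : ‖x - y‖ ^ z ≤ M2 :=
      Real.rpow_le_rpow_of_nonpos (by positivity) hxy (by linarith)
    rw [Real.norm_eq_abs, abs_of_nonneg (hH0 y)]
    calc H y = ‖x - y‖ ^ z * g y := rfl
      _ ≤ M2 * (Real.log 2 ^ (-b) * ‖y‖ ^ (-a)) :=
          mul_le_mul hker2 (hgle y) (hg0 y)
            (Real.rpow_nonneg (by positivity) _)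
      _ = M2 * Real.log 2 ^ (-b) * ‖y‖ ^ (-a) := by ring
  have hsub : closedBall (0 : EuclideanSpace ℝ (Fin d)) (1/2) ⊆
      closedBall x (r/2) ∪ (closedBall 0 (1/2) \ closedBall x (r/2)) := by
    intro y hy
    by_cases h : y ∈ closedBall x (r/2)
    · exact Or.inl h
    · exact Or.inr ⟨hy, h⟩
  have Ion : IntegrableOn H (closedBall 0 (1/2)) := (I1.union I2).mono_set hsub
  have Hind : H = (closedBall (0 : EuclideanSpace ℝ (Fin d)) (1/2)).indicator H := by
    funext y
    by_cases hy : y ∈ closedBall (0 : EuclideanSpace ℝ (Fin d)) (1/2)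
    · rw [indicator_of_mem hy]
    · rw [indicator_of_notMem hy]
      have hgz : g y = 0 := by
        rw [hg, if_neg]
        intro hcon
        exact hy (mem_closedBall_zero_iff.2 hcon.2)
      simp only [hH, hgz, mul_zero]
  have Itot : Integrable H := by
    rw [Hind]
    exact (integrable_indicator_iff measurableSet_closedBall).2 Ion
  -- the lower-bound ball
  set B := closedBall ((1/2 : ℝ) • x) (r/4) with hB
  have hLpos : 0 < Real.log (2/r) := by
    apply Real.log_pos
    rw [lt_div_iff₀ hx]
    linarith
  set L := Real.log (2/r) with hL
  set m : ℝ := (3/4*r) ^ z * (r ^ (-a) * (2*L) ^ (-b)) with hm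
  have hnormhalf : ‖(1/2 : ℝ) • x‖ = r/2 := by
    rw [norm_smul, Real.norm_eq_abs]
    rw [abs_of_nonneg (by norm_num : (0:ℝ) ≤ 1/2)]
    ring
  have hmle : ∀ y ∈ B, m ≤ H y := by
    intro y hy
    rw [mem_closedBall, dist_eq_norm] at hy
    have h2 := abs_norm_sub_norm_le y ((1/2:ℝ) • x)
    rw [abs_le, hnormhalf] at h2
    have hy1 : r/4 ≤ ‖y‖ := by linarith [h2.2, hy]
    have hy2 : ‖y‖ ≤ 3/4*r := by linarith [h2.1, hy]
    have hy3 : ‖x - y‖ ≤ 3/4*r := by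
      have hdecomp : x - y = (1/2:ℝ) • x + ((1/2:ℝ) • x - y) := by module
      calc ‖x - y‖ = ‖(1/2:ℝ) • x + ((1/2:ℝ) • x - y)‖ := by rw [← hdecomp]
        _ ≤ ‖(1/2:ℝ) • x‖ + ‖(1/2:ℝ) • x - y‖ := norm_add_le _ _
        _ ≤ r/2 + r/4 := by
            rw [hnormhalf]
            gcongr
            rw [norm_sub_rev]
            exact hy
        _ ≤ 3/4*r := by linarith
    have hy4 : r/4 ≤ ‖x - y‖ := by
      have hdecomp : (1/2:ℝ) • x = (x - y) - ((1/2:ℝ) • x - y) := by module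
      have := norm_sub_norm_le (x - y) ((1/2:ℝ) • x - y)
      have h5 : ‖(1/2:ℝ) • x‖ ≤ ‖(x - y) - ((1/2:ℝ) • x - y)‖ := by rw [← hdecomp]
      have h6 := norm_sub_le (x - y) ((1/2:ℝ) • x - y)
      have h7 : ‖(1/2:ℝ) • x - y‖ ≤ r/4 := by rw [norm_sub_rev]; exact hy
      rw [hnormhalf] at h5
      calc r/4 = r/2 - r/4 := by ring
        _ ≤ ‖(x - y) - ((1/2:ℝ) • x - y)‖ - ‖(1/2:ℝ) • x - y‖ := by
            have := h5
            linarith [h7, h5]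
        _ ≤ ‖x - y‖ := by linarith [h6]
    have hy0 : 0 < ‖y‖ := by linarith [hy1]
    have hcond : 0 < ‖y‖ ∧ ‖y‖ ≤ 1/2 := ⟨hy0, by linarith⟩
    have hgy : g y = ‖y‖ ^ (-a) * Real.log (1/‖y‖) ^ (-b) := by rw [hg, if_pos hcond]
    have e1 : (3/4*r) ^ z ≤ ‖x - y‖ ^ z :=
      Real.rpow_le_rpow_of_nonpos (by linarith) hy3 hz0.le
    have e2 : r ^ (-a) ≤ ‖y‖ ^ (-a) :=
      Real.rpow_le_rpow_of_nonpos hy0 (by linarith) (by linarith)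
    have hylog : 0 < Real.log (1/‖y‖) := by
      apply Real.log_pos
      rw [lt_div_iff₀ hy0]
      have : r ≤ 1/2 := hx2
      linarith [hy2]
    have e3 : (2*L) ^ (-b) ≤ Real.log (1/‖y‖) ^ (-b) := by
      apply Real.rpow_le_rpow_of_nonpos hylog ?_ (by linarith)
      have s1 : Real.log (1/‖y‖) ≤ Real.log (4/r) := by
        apply Real.log_le_log (by positivity)
        rw [div_le_div_iff₀ hy0 hx]
        nlinarith [hy1]
      have s2 : Real.log (4/r) = Real.log 2 + L := by
        rw [hL, ← Real.log_mul (by norm_num) (by positivity)]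
        congr 1
        field_simp
        ring
      have s3 : Real.log 2 ≤ L := by
        rw [hL]
        apply Real.log_le_log (by norm_num)
        rw [le_div_iff₀ hx]
        linarith
      linarith [s1, s2 ▸ s1]
    calc m = (3/4*r) ^ z * (r ^ (-a) * (2*L) ^ (-b)) := rfl
      _ ≤ ‖x - y‖ ^ z * (‖y‖ ^ (-a) * Real.log (1/‖y‖) ^ (-b)) := by
          apply mul_le_mul e1 ?_ ?_ (Real.rpow_nonneg (norm_nonneg _) _)
          · exact mul_le_mul e2 e3 (Real.rpow_nonneg (by positivity) _)
              (Real.rpow_nonneg (norm_nonneg _) _)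
          · exact mul_nonneg (Real.rpow_nonneg (by positivity) _)
              (Real.rpow_nonneg (by positivity) _)
      _ = H y := by simp only [hH]; rw [hgy]
  -- volume of B
  have hvolB : (volume B).toReal = (r/4) ^ (d:ℕ) * Vr := by
    rw [hB, Measure.addHaar_closedBall _ _ (by positivity), finrank_euclideanSpace_fin]
    rw [ENNReal.toReal_mul, ENNReal.toReal_ofReal (by positivity)]
  have est1 : m * ((r/4) ^ (d:ℕ) * Vr) ≤ ∫ y in B, H y := by
    rw [← hvolB]
    have := setIntegral_ge_of_const_le measurableSet_closedBall
      measure_closedBall_lt_top.ne hmle Itot.integrableOn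
    rw [smul_eq_mul, Measure.real] at this
    rw [← hB] at this
    linarith
  have est2 : ∫ y in B, H y ≤ ∫ y, H y :=
    setIntegral_le_integral Itot (Eventually.of_forall hH0)
  -- final computation
  have key : c * (Vr * (1/4:ℝ) ^ (d:ℝ) * (3/4:ℝ) ^ (s0 - (d:ℝ)) * (2:ℝ) ^ (-b)) *
      r ^ (s0 - a) * L ^ (-b) = c * (m * ((r/4) ^ (d:ℕ) * Vr)) := by
    have e4 : ((r/4) ^ (d:ℕ) : ℝ) = r ^ (d:ℝ) * (1/4:ℝ) ^ (d:ℝ) := by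
      rw [← Real.rpow_natCast (r/4) d, div_eq_mul_one_div r 4,
        Real.mul_rpow hx.le (by norm_num)]
    have e5 : (3/4*r) ^ z = (3/4:ℝ) ^ z * r ^ z := Real.mul_rpow (by norm_num) hx.le
    have e6 : (2*L) ^ (-b) = (2:ℝ) ^ (-b) * L ^ (-b) := Real.mul_rpow (by norm_num) hLpos.le
    have e7 : r ^ z * r ^ (-a) * r ^ (d:ℝ) = r ^ (s0 - a) := by
      rw [← Real.rpow_add hx, ← Real.rpow_add hx]
      congr 1
      rw [hz]; ring
    rw [hm, e4, e5, e6, ← e7]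
    ring
  calc c * (Vr * (1/4:ℝ) ^ (d:ℝ) * (3/4:ℝ) ^ (s0 - (d:ℝ)) * (2:ℝ) ^ (-b)) *
        r ^ (s0 - a) * L ^ (-b)
      = c * (m * ((r/4) ^ (d:ℕ) * Vr)) := key
    _ ≤ c * ∫ y in B, H y := mul_le_mul_of_nonneg_left est1 hc.le
    _ ≤ c * ∫ y, H y := mul_le_mul_of_nonneg_left est2 hc.le
end
end

section
/- Let d = 1, 0 < s_0 < 1, a ∈ (s_0, 1), b > 0, and g(y) = |y|^{−a}(log(1/|y|))^{−b} 𝟙_{(0,1/2]}(|y|). Then f(x) = c ∫_{−1/2}^{1/2} |x − y|^{s_0−1} g(y) dy satisfies f(x) ≥ C x^{s_0 − a} (log(2/x))^{−b} for all x ∈ (0, 1/2], with C > 0. -/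
open MeasureTheory ENNReal NNReal

noncomputable section

lemma abs_rpow_intervalIntegrable {p : ℝ} (hp : -1 < p) (A B : ℝ) :
    IntervalIntegrable (fun y : ℝ => |y| ^ p) volume A B := by
  have h0 : ∀ t : ℝ, 0 ≤ t → IntervalIntegrable (fun y : ℝ => |y| ^ p) volume 0 t := by
    intro t ht
    have h := intervalIntegral.intervalIntegrable_rpow' (a := 0) (b := t) hp
    rw [intervalIntegrable_iff, Set.uIoc_of_le ht] at h ⊢
    exact h.congr_fun (fun y hy => by rw [abs_of_pos hy.1]) measurableSet_Ioc
  have hall : ∀ t : ℝ, IntervalIntegrable (fun y : ℝ => |y| ^ p) volume 0 t := by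
    intro t
    rcases le_total 0 t with ht | ht
    · exact h0 t ht
    · have := (IntervalIntegrable.iff_comp_neg (by simp)).mp (h0 (-t) (by linarith))
      simpa using this
  exact (hall A).symm.trans (hall B)

lemma kernel_intervalIntegrable {p : ℝ} (hp : -1 < p) (x A B : ℝ) :
    IntervalIntegrable (fun y : ℝ => |x - y| ^ p) volume A B := by
  have := (abs_rpow_intervalIntegrable hp (x - A) (x - B)).comp_sub_left x
  simpa using this

/-- One-dimensional Riesz potential lower bound: with
`g(y) = |y|^{-a} (log(1/|y|))^{-b} 𝟙_{0<|y|≤1/2}` and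
`f(x) = c ∫_{-1/2}^{1/2} |x-y|^{s_0-1} g(y) dy`, one has
`f(x) ≥ C x^{s_0-a} (log(2/x))^{-b}` for `x ∈ (0,1/2]`. -/
theorem riesz_potential_lower_bound_dim_one (s0 a b c : ℝ)
    (hs0 : 0 < s0) (hs01 : s0 < 1) (ha : s0 < a) (ha1 : a < 1) (hb : 0 < b) (hc : 0 < c)
    (g : ℝ → ℝ)
    (hg : ∀ y, g y = if 0 < |y| ∧ |y| ≤ 1 / 2 then
        |y| ^ (-a) * Real.log (1 / |y|) ^ (-b) else 0) :
    ∃ C : ℝ, 0 < C ∧ ∀ x : ℝ, 0 < x → x ≤ 1 / 2 →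
      C * x ^ (s0 - a) * Real.log (2 / x) ^ (-b) ≤
        c * ∫ y in Set.Icc (-(1 / 2) : ℝ) (1 / 2), |x - y| ^ (s0 - 1) * g y := by
  refine ⟨c * (2 : ℝ) ^ (-s0) / s0, by positivity, ?_⟩
  intro x hx hx2
  set L := Real.log (2 / x) with hLdef
  set F : ℝ → ℝ := fun y => |x - y| ^ (s0 - 1) * g y with hF
  have hgnn : ∀ y, 0 ≤ g y := by
    intro y; rw [hg]; split
    · rename_i hcond
      have hlogn : 0 ≤ Real.log (1 / |y|) := by
        apply Real.log_nonneg
        rw [le_div_iff₀ hcond.1]; nlinarith [hcond.2]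
      exact mul_nonneg (Real.rpow_nonneg (abs_nonneg y) _) (Real.rpow_nonneg hlogn _)
    · exact le_rfl
  have hFnn : ∀ y, 0 ≤ F y := fun y => mul_nonneg (by positivity) (hgnn y)
  have hL2 : Real.log 2 ≤ L := by
    apply Real.log_le_log (by norm_num)
    rw [le_div_iff₀ hx]; nlinarith
  have hLpos : 0 < L := lt_of_lt_of_le (Real.log_pos (by norm_num)) hL2
  -- integrability of F on the big interval
  have hmeas : AEStronglyMeasurable F (volume.restrict (Set.Icc (-(1 / 2) : ℝ) (1 / 2))) := by
    have : F = fun y => |x - y| ^ (s0 - 1) *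
        (if 0 < |y| ∧ |y| ≤ 1 / 2 then |y| ^ (-a) * Real.log (1 / |y|) ^ (-b) else 0) := by
      funext y; simp only [hF, hg]
    rw [this]
    apply Measurable.aestronglyMeasurable
    apply Measurable.mul
    · exact ((measurable_const.sub measurable_id).abs.pow_const _)
    · apply Measurable.ite
      · exact (measurableSet_lt measurable_const measurable_id.abs).inter
          (measurableSet_le measurable_id.abs measurable_const)
      · exact (measurable_id.abs.pow_const _).mul
          ((measurable_const.div measurable_id.abs).log.pow_const _)
      · exact measurable_const
  have habsInt : IntegrableOn (fun y : ℝ => |y| ^ (-a)) (Set.Icc (-(1 / 2) : ℝ) (1 / 2)) := by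
    have := abs_rpow_intervalIntegrable (p := -a) (by linarith) (-(1 / 2)) (1 / 2)
    rwa [intervalIntegrable_iff_integrableOn_Icc_of_le (by norm_num)] at this
  have hkerInt : IntegrableOn (fun y : ℝ => |x - y| ^ (s0 - 1))
      (Set.Icc (-(1 / 2) : ℝ) (1 / 2)) := by
    have := kernel_intervalIntegrable (p := s0 - 1) (by linarith) x (-(1 / 2)) (1 / 2)
    rwa [intervalIntegrable_iff_integrableOn_Icc_of_le (by norm_num)] at this
  set K1 : ℝ := (x / 2) ^ (s0 - 1) * Real.log 2 ^ (-b) with hK1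
  set K2 : ℝ := (x / 2) ^ (-a) * Real.log 2 ^ (-b) with hK2
  have hdom : ∀ y : ℝ, ‖F y‖ ≤ K1 * |y| ^ (-a) + K2 * |x - y| ^ (s0 - 1) := by
    intro y
    rw [Real.norm_eq_abs, abs_of_nonneg (hFnn y)]
    show |x - y| ^ (s0 - 1) * g y ≤ _
    by_cases hy : 0 < |y| ∧ |y| ≤ 1 / 2
    · have hgy : g y = |y| ^ (-a) * Real.log (1 / |y|) ^ (-b) := by rw [hg, if_pos hy]
      have hlogy : Real.log 2 ≤ Real.log (1 / |y|) := by
        apply Real.log_le_log (by norm_num)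
        rw [le_div_iff₀ hy.1]; nlinarith [hy.2]
      have hlog3 : Real.log (1 / |y|) ^ (-b) ≤ Real.log 2 ^ (-b) :=
        Real.rpow_le_rpow_of_nonpos (Real.log_pos (by norm_num)) hlogy (by linarith)
      rcases le_total |y| |x - y| with h1 | h1
      · have hxy : x / 2 ≤ |x - y| := by
          have : x ≤ |x - y| + |y| := by
            calc x = (x - y) + y := by ring
            _ ≤ |x - y| + |y| := add_le_add (le_abs_self _) (le_abs_self _)
          linarith
        have hker : |x - y| ^ (s0 - 1) ≤ (x / 2) ^ (s0 - 1) :=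
          Real.rpow_le_rpow_of_nonpos (by linarith) hxy (by linarith)
        have : |x - y| ^ (s0 - 1) * g y ≤ K1 * |y| ^ (-a) := by
          rw [hgy, hK1]
          calc |x - y| ^ (s0 - 1) * (|y| ^ (-a) * Real.log (1 / |y|) ^ (-b))
              ≤ (x / 2) ^ (s0 - 1) * (|y| ^ (-a) * Real.log 2 ^ (-b)) := by
                have hly : 0 < Real.log (1 / |y|) :=
                  lt_of_lt_of_le (Real.log_pos one_lt_two) hlogy
                apply mul_le_mul hker (mul_le_mul_of_nonneg_left hlog3 (by positivity))
                  (mul_nonneg (Real.rpow_nonneg (abs_nonneg y) _)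
                    (Real.rpow_nonneg hly.le _)) (by positivity)
            _ = (x / 2) ^ (s0 - 1) * Real.log 2 ^ (-b) * |y| ^ (-a) := by ring
        have h2 : 0 ≤ K2 * |x - y| ^ (s0 - 1) := by positivity
        linarith
      · have hxy : x / 2 ≤ |y| := by
          have : x ≤ |x - y| + |y| := by
            calc x = (x - y) + y := by ring
            _ ≤ |x - y| + |y| := add_le_add (le_abs_self _) (le_abs_self _)
          linarith
        have hker : |y| ^ (-a) ≤ (x / 2) ^ (-a) :=
          Real.rpow_le_rpow_of_nonpos (by linarith) hxy (by linarith)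
        have : |x - y| ^ (s0 - 1) * g y ≤ K2 * |x - y| ^ (s0 - 1) := by
          rw [hgy, hK2]
          calc |x - y| ^ (s0 - 1) * (|y| ^ (-a) * Real.log (1 / |y|) ^ (-b))
              ≤ |x - y| ^ (s0 - 1) * ((x / 2) ^ (-a) * Real.log 2 ^ (-b)) := by
                have hly : 0 < Real.log (1 / |y|) :=
                  lt_of_lt_of_le (Real.log_pos one_lt_two) hlogy
                apply mul_le_mul_of_nonneg_left
                  (mul_le_mul hker hlog3 (Real.rpow_nonneg hly.le _) (by positivity))
                    (by positivity)
            _ = (x / 2) ^ (-a) * Real.log 2 ^ (-b) * |x - y| ^ (s0 - 1) := by ring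
        have h2 : 0 ≤ K1 * |y| ^ (-a) := by positivity
        linarith
    · have hgy : g y = 0 := by rw [hg, if_neg hy]
      rw [hgy, mul_zero]
      positivity
  have hFint : IntegrableOn F (Set.Icc (-(1 / 2) : ℝ) (1 / 2)) := by
    apply Integrable.mono' ((habsInt.const_mul K1).add (hkerInt.const_mul K2)) hmeas
    exact ae_of_all _ hdom
  -- restrict to the subinterval Ioc (x/2) x
  have hsub : Set.Ioc (x / 2) x ⊆ Set.Icc (-(1 / 2) : ℝ) (1 / 2) := by
    intro y hy
    constructor <;> [linarith [hy.1]; linarith [hy.2]]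
  have key1 : ∫ y in Set.Ioc (x / 2) x, F y ≤
      ∫ y in Set.Icc (-(1 / 2) : ℝ) (1 / 2), F y :=
    setIntegral_mono_set hFint (ae_of_all _ hFnn) (HasSubset.Subset.eventuallyLE hsub)
  -- lower bound on the subinterval
  have hkerIoc : IntegrableOn (fun y : ℝ => |x - y| ^ (s0 - 1)) (Set.Ioc (x / 2) x) := by
    have := kernel_intervalIntegrable (p := s0 - 1) (by linarith) x (x / 2) x
    rwa [intervalIntegrable_iff, Set.uIoc_of_le (by linarith)] at this
  have key2 : ∫ y in Set.Ioc (x / 2) x, (x ^ (-a) * L ^ (-b)) * |x - y| ^ (s0 - 1) ≤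
      ∫ y in Set.Ioc (x / 2) x, F y := by
    apply setIntegral_mono_on (hkerIoc.const_mul _) (hFint.mono_set hsub) measurableSet_Ioc
    intro y hy
    have hy0 : 0 < y := lt_of_le_of_lt (by linarith) hy.1
    have hyx : y ≤ x := hy.2
    have habsy : |y| = y := abs_of_pos hy0
    have hgy : g y = y ^ (-a) * Real.log (1 / y) ^ (-b) := by
      rw [hg]; rw [habsy]; rw [if_pos ⟨hy0, by linarith⟩]
    have hxa : x ^ (-a) ≤ y ^ (-a) := Real.rpow_le_rpow_of_nonpos hy0 hyx (by linarith)
    have hlogy2 : 0 < Real.log (1 / y) := by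
      apply Real.log_pos
      rw [lt_div_iff₀ hy0]; linarith
    have hlogle : Real.log (1 / y) ≤ L := by
      apply Real.log_le_log (by positivity)
      rw [div_le_div_iff₀ hy0 hx]; nlinarith [hy.1]
    have hLb : L ^ (-b) ≤ Real.log (1 / y) ^ (-b) :=
      Real.rpow_le_rpow_of_nonpos hlogy2 hlogle (by linarith)
    show _ ≤ |x - y| ^ (s0 - 1) * g y
    rw [hgy]
    calc x ^ (-a) * L ^ (-b) * |x - y| ^ (s0 - 1)
        ≤ y ^ (-a) * Real.log (1 / y) ^ (-b) * |x - y| ^ (s0 - 1) := by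
          apply mul_le_mul_of_nonneg_right
            (mul_le_mul hxa hLb (Real.rpow_nonneg hLpos.le _) (Real.rpow_nonneg hy0.le _))
            (by positivity)
      _ = |x - y| ^ (s0 - 1) * (y ^ (-a) * Real.log (1 / y) ^ (-b)) := by ring
  -- compute the kernel integral on the subinterval
  have hval : ∫ y in Set.Ioc (x / 2) x, |x - y| ^ (s0 - 1) = (x / 2) ^ s0 / s0 := by
    rw [← intervalIntegral.integral_of_le (by linarith : x / 2 ≤ x)]
    rw [intervalIntegral.integral_comp_sub_left (fun t : ℝ => |t| ^ (s0 - 1)) x]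
    have heq : Set.EqOn (fun t : ℝ => |t| ^ (s0 - 1)) (fun t : ℝ => t ^ (s0 - 1))
        (Set.uIcc (x - x) (x - x / 2)) := by
      intro t ht
      rw [Set.uIcc_of_le (by linarith), sub_self] at ht
      simp only
      rw [abs_of_nonneg ht.1]
    rw [intervalIntegral.integral_congr heq]
    rw [integral_rpow (Or.inl (by linarith))]
    rw [sub_self, Real.zero_rpow (by linarith : s0 - 1 + 1 ≠ 0)]
    have : x - x / 2 = x / 2 := by ring
    rw [this, sub_add_cancel]
    ring
  have key3 : ∫ y in Set.Ioc (x / 2) x, (x ^ (-a) * L ^ (-b)) * |x - y| ^ (s0 - 1) =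
      (x ^ (-a) * L ^ (-b)) * ((x / 2) ^ s0 / s0) := by
    rw [integral_const_mul, hval]
  -- put everything together
  have hfinal : (x ^ (-a) * L ^ (-b)) * ((x / 2) ^ s0 / s0) ≤
      ∫ y in Set.Icc (-(1 / 2) : ℝ) (1 / 2), F y := by
    rw [← key3]; exact le_trans key2 key1
  have hrw : c * (2 : ℝ) ^ (-s0) / s0 * x ^ (s0 - a) * L ^ (-b) =
      c * ((x ^ (-a) * L ^ (-b)) * ((x / 2) ^ s0 / s0)) := by
    rw [Real.div_rpow hx.le (by norm_num : (0:ℝ) ≤ 2)]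
    rw [show s0 - a = s0 + (-a) by ring, Real.rpow_add hx]
    rw [Real.rpow_neg (by norm_num : (0:ℝ) ≤ 2)]
    field_simp
  rw [hrw]
  exact mul_le_mul_of_nonneg_left hfinal hc.le
end
end
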